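/- Let p and q be coprime positive integers. If (r₁, s₁, k) and (r₂, s₂) satisfy r₁, r₂ ∈ {0,...,q−1}, s₁, s₂ ∈ {0,...,p−1}, k ∈ ℤ, and (r₁, s₁, k) ≠ (r₂, s₂, 0), then the intervals [r₁/q + s₁/p, r₁/q + s₁/p + 1/(pq)) and [k + r₂/q + s₂/p, k + r₂/q + s₂/p + 1/(pq)) are disjoint. -/

import Mathlib

open Set

lemma int_key (p q : ℕ) (hp : 0 < p) (hq : 0 < q) (hco : Nat.Coprime p q)
    (r₁ r₂ s₁ s₂ : ℕ) (hr₁ : r₁ < q) (hr₂ : r₂ < q) (hs₁ : s₁ < p) (hs₂ : s₂ < p)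
    (k : ℤ) (hne : (r₁, s₁, k) ≠ (r₂, s₂, 0)) :
    (r₁ : ℤ) * p + s₁ * q ≠ k * (p * q) + r₂ * p + s₂ * q := by
  intro h
  have hcop : IsCoprime (p : ℤ) (q : ℤ) :=
    Int.isCoprime_iff_gcd_eq_one.mpr (by exact_mod_cast hco)
  have hps : (p : ℤ) ∣ ((s₁ : ℤ) - s₂) * q := ⟨k * q - ((r₁ : ℤ) - r₂), by linarith [h]⟩
  have hps' : (p : ℤ) ∣ ((s₁ : ℤ) - s₂) := hcop.dvd_of_dvd_mul_right hps
  have hs : s₁ = s₂ := by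
    have := Int.eq_zero_of_abs_lt_dvd hps'
      (by rw [abs_sub_lt_iff]; constructor <;> push_cast <;> omega)
    omega
  subst hs
  have hcanc : ((r₁ : ℤ) - r₂) * p = (k * q) * p := by linarith [h]
  have hqr : (q : ℤ) ∣ ((r₁ : ℤ) - r₂) :=
    ⟨k, by have := mul_right_cancel₀ (show (p : ℤ) ≠ 0 by positivity) hcanc; linarith⟩
  have hr : r₁ = r₂ := by
    have := Int.eq_zero_of_abs_lt_dvd hqr
      (by rw [abs_sub_lt_iff]; constructor <;> push_cast <;> omega)
    omega
  subst hr
  have hk : k = 0 := by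
    have hpq : (0 : ℤ) < (p : ℤ) * q := by positivity
    nlinarith [h]
  exact hne (by simp [hk])

theorem stmt_1 (p q : ℕ) (hp : 0 < p) (hq : 0 < q) (hco : Nat.Coprime p q)
    (r₁ r₂ s₁ s₂ : ℕ) (hr₁ : r₁ ≤ q - 1) (hr₂ : r₂ ≤ q - 1)
    (hs₁ : s₁ ≤ p - 1) (hs₂ : s₂ ≤ p - 1) (k : ℤ)
    (hne : (r₁, s₁, k) ≠ (r₂, s₂, 0)) :
    Disjoint
      (Ico ((r₁ : ℝ) / q + (s₁ : ℝ) / p) ((r₁ : ℝ) / q + (s₁ : ℝ) / p + 1 / (p * q)))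
      (Ico ((k : ℝ) + (r₂ : ℝ) / q + (s₂ : ℝ) / p)
        ((k : ℝ) + (r₂ : ℝ) / q + (s₂ : ℝ) / p + 1 / (p * q))) := by
  have hr₁' : r₁ < q := by omega
  have hr₂' : r₂ < q := by omega
  have hs₁' : s₁ < p := by omega
  have hs₂' : s₂ < p := by omega
  have hN : (0 : ℝ) < (p : ℝ) * q := by positivity
  set n₁ : ℤ := (r₁ : ℤ) * p + s₁ * q with hn₁
  set n₂ : ℤ := k * (p * q) + r₂ * p + s₂ * q with hn₂
  have hne' : n₁ ≠ n₂ := int_key p q hp hq hco r₁ r₂ s₁ s₂ hr₁' hr₂' hs₁' hs₂' k hne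
  have ha : (r₁ : ℝ) / q + (s₁ : ℝ) / p = (n₁ : ℝ) / ((p : ℝ) * q) := by
    rw [hn₁]; rw [eq_div_iff (by positivity)]
    field_simp
    push_cast; ring
  have hb : (k : ℝ) + (r₂ : ℝ) / q + (s₂ : ℝ) / p = (n₂ : ℝ) / ((p : ℝ) * q) := by
    rw [hn₂]; rw [eq_div_iff (by positivity)]
    field_simp
    push_cast; ring
  rw [ha, hb, Set.Ico_disjoint_Ico]
  have key : ∀ m n : ℤ, m < n →
      (m : ℝ) / ((p : ℝ) * q) + 1 / ((p : ℝ) * q) ≤ (n : ℝ) / ((p : ℝ) * q) := by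
    intro m n hmn
    rw [← add_div, div_le_div_iff_of_pos_right hN]
    exact_mod_cast Int.add_one_le_of_lt hmn
  rcases lt_or_gt_of_ne hne' with h | h
  · exact le_trans (min_le_left _ _) (le_trans (key _ _ h) (le_max_right _ _))
  · exact le_trans (min_le_right _ _) (le_trans (key _ _ h) (le_max_left _ _))
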